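/- For a partial itinerary I of an OPMPC instance, the potential score pot(I) = score(I) + extra(I) is an upper bound on the score of any complete itinerary extending I, where extra(I) sums, for each category k, the (max_k - u_k) highest scores among POIs of category k not in I (with u_k the number of category-k POIs in I). -/

import Mathlib

/-- Sum of the `k` largest elements of a multiset of reals. -/
noncomputable def topSum (S : Multiset ℝ) (k : ℕ) : ℝ :=
  ((S.sort (· ≤ ·)).reverse.take k).sum


lemma take_sum_nonneg (l : List ℝ) (h : ∀ x ∈ l, (0:ℝ) ≤ x) (k : ℕ) :
    0 ≤ (l.take k).sum :=
  List.sum_nonneg fun x hx => h x (List.mem_of_mem_take hx)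

/-- Key list lemma: any sub-multiset of a descending-sorted nonneg list,
of size at most `k`, has sum at most the sum of the first `k` entries. -/
lemma sub_sum_le_take_sum :
    ∀ (l : List ℝ), l.Pairwise (· ≥ ·) → (∀ x ∈ l, (0:ℝ) ≤ x) →
      ∀ (k : ℕ) (T : Multiset ℝ), T ≤ ↑l → T.card ≤ k →
        T.sum ≤ (l.take k).sum := by
  intro l
  induction l with
  | nil =>
    intro _ _ k T hT _
    have : T = 0 := Multiset.le_zero.mp (by simpa using hT)
    simp [this]
  | cons b l' ih =>
    intro hs hnn k T hT hcard
    rcases eq_or_ne T 0 with hTe | hTne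
    · simpa [hTe] using take_sum_nonneg (b :: l') hnn k
    · have hk : 1 ≤ k := le_trans (Multiset.card_pos.mpr hTne) hcard
      obtain ⟨k', rfl⟩ : ∃ k', k = k' + 1 := ⟨k - 1, by omega⟩
      have hs' : l'.Pairwise (· ≥ ·) := hs.of_cons
      have hnn' : ∀ x ∈ l', (0:ℝ) ≤ x := fun x hx => hnn x (List.mem_cons_of_mem _ hx)
      have hcoe : (↑(b :: l') : Multiset ℝ) = b ::ₘ ↑l' := rfl
      rw [hcoe] at hT
      by_cases hb : b ∈ T
      · obtain ⟨T', rfl⟩ := Multiset.exists_cons_of_mem hb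
        have hT' : T' ≤ ↑l' := (Multiset.cons_le_cons_iff b).mp hT
        have : T'.sum ≤ ((l'.take k')).sum := by
          apply ih hs' hnn' k' T' hT'
          simpa using hcard
        simpa [List.take_succ_cons] using add_le_add_right this b
      · have hTl' : T ≤ ↑l' := by
          rw [Multiset.le_iff_count]
          intro x
          have := (Multiset.le_iff_count.mp hT) x
          by_cases hx : x = b
          · subst hx; simp [Multiset.count_eq_zero_of_notMem hb]
          · simpa [Multiset.count_cons, hx, List.count_cons, Ne.symm hx] using this
        obtain ⟨a, haT⟩ := Multiset.exists_mem_of_ne_zero hTne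
        obtain ⟨T'', rfl⟩ := Multiset.exists_cons_of_mem haT
        have hab : a ≤ b := by
          have hal : a ∈ (↑l' : Multiset ℝ) := Multiset.mem_of_le hTl' haT
          exact (List.rel_of_pairwise_cons hs (Multiset.mem_coe.mp hal))
        have hT'' : T'' ≤ ↑l' := le_trans (Multiset.le_cons_self T'' a) hTl'
        have : T''.sum ≤ ((l'.take k')).sum := by
          apply ih hs' hnn' k' T'' hT''
          simpa using hcard
        calc (a ::ₘ T'').sum = a + T''.sum := by simp
          _ ≤ b + (l'.take k').sum := add_le_add hab this
          _ = ((b :: l').take (k'+1)).sum := by simp [List.take_succ_cons]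

/-- Any sub-multiset of `S` with at most `k` elements has sum at most `topSum S k`. -/
lemma sum_le_topSum (S T : Multiset ℝ) (hS : ∀ x ∈ S, (0:ℝ) ≤ x)
    (hT : T ≤ S) (k : ℕ) (hc : T.card ≤ k) : T.sum ≤ topSum S k := by
  set l := S.sort (· ≤ ·) with hl
  have hsorted : l.reverse.Pairwise (· ≥ ·) := by
    rw [List.pairwise_reverse]
    exact Multiset.pairwise_sort S (· ≤ ·)
  have hcoe : (↑l.reverse : Multiset ℝ) = S := by
    rw [Multiset.coe_eq_coe.mpr (List.reverse_perm l)]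
    exact Multiset.sort_eq S (· ≤ ·)
  have hnn : ∀ x ∈ l.reverse, (0:ℝ) ≤ x := by
    intro x hx
    exact hS x (by rw [← hcoe]; exact Multiset.mem_coe.mpr hx)
  exact sub_sum_le_take_sum l.reverse hsorted hnn k T (hcoe ▸ hT) hc

/-- The `extra` heuristic: for each category, the sum of the top
`max_k - u_k` scores among remaining POIs of that category. -/
noncomputable def extra {ι K : Type} [DecidableEq ι] [DecidableEq K]
    (P : Finset ι) (Kset : Finset K) (cat : ι → K) (score : ι → ℝ)
    (maxk : K → ℕ) (I : Finset ι) : ℝ :=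
  ∑ k ∈ Kset, topSum (((P \ I).filter (fun p => cat p = k)).val.map score)
      (maxk k - (I.filter (fun p => cat p = k)).card)

/-- Potential score of a (partial) itinerary. -/
noncomputable def pot {ι K : Type} [DecidableEq ι] [DecidableEq K]
    (P : Finset ι) (Kset : Finset K) (cat : ι → K) (score : ι → ℝ)
    (maxk : K → ℕ) (I : Finset ι) : ℝ :=
  (∑ p ∈ I, score p) + extra P Kset cat score maxk I

/-- the potential score of a partial itinerary upper-bounds
the score of any complete itinerary extending it. -/
theorem pot_upper_bound {ι K : Type} [DecidableEq ι] [DecidableEq K]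
    (P : Finset ι) (Kset : Finset K) (cat : ι → K) (score : ι → ℝ)
    (maxk : K → ℕ)
    (hscore : ∀ p, 0 ≤ score p)
    (hcat : ∀ p ∈ P, cat p ∈ Kset)
    (I I' : Finset ι)
    (hIP : I ⊆ P) (hsub : I ⊆ I') (hI'P : I' ⊆ P)
    (hconstr : ∀ k, (I'.filter (fun p => cat p = k)).card ≤ maxk k) :
    (∑ p ∈ I', score p) ≤ pot P Kset cat score maxk I := by
  rw [pot]
  have hsplit : ∑ p ∈ I' \ I, score p + ∑ p ∈ I, score p = ∑ p ∈ I', score p :=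
    Finset.sum_sdiff hsub
  rw [← hsplit, add_comm]
  apply add_le_add_right
  have hmaps : ∀ p ∈ I' \ I, cat p ∈ Kset := fun p hp =>
    hcat p (hI'P (Finset.mem_sdiff.mp hp).1)
  rw [← Finset.sum_fiberwise_of_maps_to hmaps score, extra]
  apply Finset.sum_le_sum
  intro k _
  rw [show (∑ p ∈ (I' \ I).filter (fun p => cat p = k), score p)
      = ((((I' \ I).filter (fun p => cat p = k)).val.map score)).sum from rfl]
  apply sum_le_topSum
  · intro x hx
    obtain ⟨p, _, rfl⟩ := Multiset.mem_map.mp hx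
    exact hscore p
  · apply Multiset.map_le_map
    rw [Finset.val_le_iff]
    exact Finset.filter_subset_filter _ (Finset.sdiff_subset_sdiff hI'P (le_refl I))
  · rw [Multiset.card_map, ← Finset.card_def]
    have hfs : (I' \ I).filter (fun p => cat p = k)
        = I'.filter (fun p => cat p = k) \ I.filter (fun p => cat p = k) := by
      ext p
      simp only [Finset.mem_filter, Finset.mem_sdiff]
      tauto
    have hss : I.filter (fun p => cat p = k) ⊆ I'.filter (fun p => cat p = k) :=
      Finset.filter_subset_filter _ hsub
    rw [hfs, Finset.card_sdiff_of_subset hss]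
    exact Nat.sub_le_sub_right (hconstr k) _
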